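/- Let p > 2 be prime, r > 1 with r ≡ 1 (mod p-1), t = v_p(r-1), and let a ∈ Z̄_p with 0 < v(a) < 1, where v is the valuation normalized so v(p) = 1. Set t_0 = min{t + 1 + v(a), v(a² - rp)}. Then for every integer s ≥ 2, one has v(a^{s-1}(a² - p)) ≥ t_0. -/

import Mathlib

private lemma vnat_nonneg {K : Type*} [Field K] (v : AddValuation K (WithTop ℝ)) :
    ∀ n : ℕ, (0 : WithTop ℝ) ≤ v (n : K) := by
  intro n
  induction n with
  | zero => simp
  | succ n ih =>
    push_cast
    refine v.map_le_add ih ?_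
    simp

private lemma nsmul_one_eq {n : ℕ} : n • ((1 : ℝ) : WithTop ℝ) = ((n : ℝ) : WithTop ℝ) := by
  induction n with
  | zero => simp
  | succ n ih => simp [succ_nsmul, ih]

/-- If 0 < v(a) < 1 and t₀ = min(t + 1 + v(a), v(a² - rp)) with t = v_p(r-1),
    then v(a^{s-1}(a² - p)) ≥ t₀ for all s ≥ 2.  Here K is a valued field
    extending ℚ_p, formalized via an additive valuation v with v(p) = 1. -/
theorem stmt_15 (p : ℕ) (hp : p.Prime) (hp2 : 2 < p) (r : ℕ) (hr : 1 < r)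
    (hcong : (p - 1) ∣ (r - 1)) (t : ℕ) (ht : t = padicValNat p (r - 1))
    (K : Type*) [Field K] (v : AddValuation K (WithTop ℝ))
    (hvp : v (p : K) = (1 : ℝ))
    (a : K) (ha0 : 0 < v a) (ha1 : v a < (1 : ℝ))
    (t₀ : WithTop ℝ)
    (ht₀ : t₀ = min (((t : ℝ) + 1 : ℝ) + v a) (v (a ^ 2 - (r : K) * p))) :
    ∀ s : ℕ, 2 ≤ s → v (a ^ (s - 1) * (a ^ 2 - (p : K))) ≥ t₀ := by
  intro s hs
  set n := s - 1 with hn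
  have hn1 : 1 ≤ n := by omega
  -- v of r - 1 as a natural number in K
  have hdvd : p ^ t ∣ (r - 1) := by
    rw [ht]; exact pow_padicValNat_dvd
  obtain ⟨m, hm⟩ := hdvd
  have hvr1 : ((t : ℝ) : WithTop ℝ) ≤ v (((r - 1 : ℕ) : K)) := by
    rw [hm]
    push_cast
    rw [v.map_mul, v.map_pow, hvp, nsmul_one_eq]
    have := vnat_nonneg v m
    calc ((t : ℝ) : WithTop ℝ) = ((t : ℝ) : WithTop ℝ) + 0 := by rw [add_zero]
    _ ≤ ((t : ℝ) : WithTop ℝ) + v (m : K) := add_le_add_right this _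
  -- key identity
  have hident : a ^ n * (a ^ 2 - (p : K)) =
      a ^ n * (a ^ 2 - (r : K) * p) + a ^ n * (p : K) * (((r - 1 : ℕ) : K)) := by
    rw [Nat.cast_sub hr.le]
    push_cast
    ring
  rw [hident, ht₀]
  have hvan : (0 : WithTop ℝ) ≤ v (a ^ n) := by
    rw [v.map_pow]
    exact nsmul_nonneg ha0.le n
  have hvan' : v a ≤ v (a ^ n) := by
    rw [v.map_pow]
    calc v a = 1 • v a := (one_nsmul _).symm
    _ ≤ n • v a := nsmul_le_nsmul_left ha0.le hn1
  refine v.map_le_add ?_ ?_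
  · -- first term ≥ min ≥ v(a²-rp)
    refine le_trans (min_le_right _ _) ?_
    rw [v.map_mul]
    calc v (a ^ 2 - (r : K) * p) = 0 + v (a ^ 2 - (r : K) * p) := (zero_add _).symm
    _ ≤ v (a ^ n) + v (a ^ 2 - (r : K) * p) := add_le_add_left hvan _
  · -- second term ≥ min ≥ t + 1 + v a
    refine le_trans (min_le_left _ _) ?_
    rw [v.map_mul, v.map_mul, hvp]
    have h1 : (((t : ℝ) + 1 : ℝ) : WithTop ℝ) + v a
        = v a + (1 : ℝ) + ((t : ℝ) : WithTop ℝ) := by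
      rw [WithTop.coe_add]
      abel
    rw [h1]
    exact add_le_add (add_le_add_left hvan' _) hvr1
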